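/- arXiv:2502.17373 — 3 statements merged into one kernel-verified Lean document; each statement's English description precedes it below -/
import Mathlib

section
/- Let f : ℝⁿ → ℝ be convex and L-smooth (i.e., differentiable with L-Lipschitz gradient, L > 0), and let x* be a minimizer of f with f* = f(x*). Fix a step size α ∈ (0, 1/L] and a parameter r ≥ 3. Define the Nesterov accelerated gradient iterates by x₋₁ = x₀ (given), y_k = x_k + ((k-1)/(k+r-1))·(x_k − x_{k-1}) and x_{k+1} = y_k − α∇f(y_k) for all k ≥ 0. Then for every k ≥ 0, f(x_k) − f* ≤ (r−1)²·‖x₀ − x*‖² / (2α(k+r−2)²). -/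
open RealInnerProductSpace

set_option maxHeartbeats 1000000


theorem descent_aux {n : ℕ} (f : EuclideanSpace ℝ (Fin n) → ℝ) (L : ℝ)
    (hsmooth : ContDiff ℝ 1 f)
    (hlip : ∀ a b, ‖gradient f a - gradient f b‖ ≤ L * ‖a - b‖)
    (a b : EuclideanSpace ℝ (Fin n)) :
    f b ≤ f a + ⟪gradient f a, b - a⟫ + L / 2 * ‖b - a‖ ^ 2 := by
  set c := b - a with hc
  have hgrad : Continuous (gradient f) := by
    unfold gradient
    exact (LinearIsometryEquiv.continuous _).comp (hsmooth.continuous_fderiv one_ne_zero)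
  have hpath : ∀ t : ℝ, HasDerivAt (fun s : ℝ => f (a + s • c)) ⟪gradient f (a + t • c), c⟫ t := by
    intro t
    have hd : DifferentiableAt ℝ f (a + t • c) := hsmooth.differentiable one_ne_zero _
    have hf : HasFDerivAt f (InnerProductSpace.toDual ℝ _ (gradient f (a + t • c))) (a + t • c) :=
      hd.hasGradientAt.hasFDerivAt
    have hp : HasDerivAt (fun s : ℝ => a + s • c) c t := by
      simpa using ((hasDerivAt_id t).smul_const c).const_add a
    have := hf.comp_hasDerivAt t hp
    exact this
  have hgc : Continuous fun t : ℝ => ⟪gradient f (a + t • c), c⟫ := by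
    exact (hgrad.comp (continuous_const.add (continuous_id.smul continuous_const))).inner continuous_const
  have key : f b - f a = ∫ t in (0:ℝ)..1, ⟪gradient f (a + t • c), c⟫ := by
    have := intervalIntegral.integral_eq_sub_of_hasDerivAt
      (fun t _ => hpath t) (hgc.intervalIntegrable 0 1)
    rw [this]
    norm_num [hc]
  have hbound : ∀ t ∈ Set.Icc (0:ℝ) 1,
      ⟪gradient f (a + t • c), c⟫ ≤ ⟪gradient f a, c⟫ + L * ‖c‖ ^ 2 * t := by
    intro t ht
    have h1 : ⟪gradient f (a + t • c) - gradient f a, c⟫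
        ≤ ‖gradient f (a + t • c) - gradient f a‖ * ‖c‖ := real_inner_le_norm _ _
    have h2 : ‖gradient f (a + t • c) - gradient f a‖ ≤ L * (t * ‖c‖) := by
      have := hlip (a + t • c) a
      simpa [norm_smul, abs_of_nonneg ht.1] using this
    have h4 : ⟪gradient f (a + t • c) - gradient f a, c⟫
        = ⟪gradient f (a + t • c), c⟫ - ⟪gradient f a, c⟫ := inner_sub_left _ _ _
    have h5 : ‖gradient f (a + t • c) - gradient f a‖ * ‖c‖ ≤ (L * (t * ‖c‖)) * ‖c‖ :=
      mul_le_mul_of_nonneg_right h2 (norm_nonneg c)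
    nlinarith [h1, h4, h5]
  have hInt : ∫ t in (0:ℝ)..1, ⟪gradient f (a + t • c), c⟫
      ≤ ∫ t in (0:ℝ)..1, (⟪gradient f a, c⟫ + L * ‖c‖ ^ 2 * t) := by
    apply intervalIntegral.integral_mono_on zero_le_one (hgc.intervalIntegrable 0 1)
      (Continuous.intervalIntegrable (continuous_const.add ((continuous_const.mul continuous_id))) 0 1) hbound
  have hIntVal : ∫ t in (0:ℝ)..1, (⟪gradient f a, c⟫ + L * ‖c‖ ^ 2 * t)
      = ⟪gradient f a, c⟫ + L / 2 * ‖c‖ ^ 2 := by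
    rw [intervalIntegral.integral_add (intervalIntegrable_const)
      (((by fun_prop : Continuous fun t : ℝ => L * ‖c‖ ^ 2 * t)).intervalIntegrable 0 1),
      intervalIntegral.integral_const, intervalIntegral.integral_const_mul, integral_id]
    norm_num
    ring
  linarith [key, hInt, hIntVal]

/-- Nesterov's accelerated gradient method on an `L`-smooth convex function:
`O(1/k^2)` convergence rate with step size `α ∈ (0, 1/L]` and momentum
`β_k = (k-1)/(k+r-1)`, `r ≥ 3`.  The initial condition `x₋₁ = x₀` is encoded by
ℕ-subtraction: at `k = 0` the momentum term `x 0 - x (0-1) = 0`. -/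
theorem nesterov_convex_rate {n : ℕ} (f : EuclideanSpace ℝ (Fin n) → ℝ)
    (L : ℝ) (hL : 0 < L)
    (hsmooth : ContDiff ℝ 1 f)
    (hlip : ∀ a b, ‖gradient f a - gradient f b‖ ≤ L * ‖a - b‖)
    (hconv : ∀ a b, f a + ⟪gradient f a, b - a⟫ ≤ f b)
    (xs : EuclideanSpace ℝ (Fin n)) (hmin : ∀ z, f xs ≤ f z)
    (α r : ℝ) (hα : 0 < α) (hαL : α ≤ 1 / L) (hr : 3 ≤ r)
    (x y : ℕ → EuclideanSpace ℝ (Fin n))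
    (hy : ∀ k : ℕ, y k = x k + (((k : ℝ) - 1) / ((k : ℝ) + r - 1)) • (x k - x (k - 1)))
    (hx : ∀ k : ℕ, x (k + 1) = y k - α • gradient f (y k)) :
    ∀ k : ℕ, f (x k) - f xs ≤
      (r - 1) ^ 2 * ‖x 0 - xs‖ ^ 2 / (2 * α * ((k : ℝ) + r - 2) ^ 2) := by
  have hr1 : (0:ℝ) < r - 1 := by linarith
  have hr2 : (0:ℝ) < r - 2 := by linarith
  have hαL' : α * L ≤ 1 := by
    rw [le_div_iff₀ hL] at hαL; linarith
  have hδ : ∀ k, 0 ≤ f (x k) - f xs := fun k => by linarith [hmin (x k)]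
  have hC : (0:ℝ) ≤ ‖x 0 - xs‖ ^ 2 := sq_nonneg _
  have hgxs : gradient f xs = 0 := by
    have hloc : IsLocalMin f xs := Filter.Eventually.of_forall hmin
    have h0 : fderiv ℝ f xs = 0 := hloc.fderiv_eq_zero
    unfold gradient
    rw [h0, map_zero]
  set t : ℕ → ℝ := fun k => ((k:ℝ) + r - 2) / (r - 1) with ht
  set v : ℕ → EuclideanSpace ℝ (Fin n) := fun k => x (k-1) + t k • (x k - x (k-1)) with hv
  have hT1 : ∀ k : ℕ, 1 ≤ t (k+1) := by
    intro k
    simp only [ht]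
    rw [le_div_iff₀ hr1]
    push_cast
    have := (Nat.cast_nonneg k : (0:ℝ) ≤ k)
    linarith
  have hstep : ∀ (k : ℕ) z, f (x (k+1)) ≤
      f z + ⟪gradient f (y k), y k - z⟫ - α/2 * ‖gradient f (y k)‖^2 := by
    intro k z
    have hd := descent_aux f L hsmooth hlip (y k) (x (k+1))
    have hcz := hconv (y k) z
    set g := gradient f (y k) with hg
    have he : x (k+1) - y k = -(α • g) := by rw [hx k]; abel
    rw [he] at hd
    have h1 : ⟪g, -(α • g)⟫ = -(α * ‖g‖^2) := by
      rw [inner_neg_right, real_inner_smul_right, real_inner_self_eq_norm_sq]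
    have h2 : ‖-(α • g)‖^2 = α^2 * ‖g‖^2 := by
      rw [norm_neg, norm_smul, Real.norm_eq_abs, mul_pow, sq_abs]
    have h3 : L/2 * (α^2 * ‖g‖^2) ≤ α/2 * ‖g‖^2 := by
      nlinarith [mul_le_mul_of_nonneg_right (mul_le_mul_of_nonneg_right hαL' hα.le)
        (sq_nonneg ‖g‖), sq_nonneg ‖g‖, hα]
    rw [h1, h2] at hd
    have h4 : ⟪g, z - y k⟫ = -⟪g, y k - z⟫ := by
      rw [← inner_neg_right]; congr 1; abel
    rw [h4] at hcz
    linarith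
  have hβ : ∀ k : ℕ, t (k+1) * (((k:ℝ)-1)/((k:ℝ)+r-1)) = t k - 1 := by
    intro k
    have h0 := (Nat.cast_nonneg k : (0:ℝ) ≤ k)
    have hne : (k:ℝ) + r - 1 ≠ 0 := by linarith
    simp only [ht]
    push_cast
    field_simp
    ring
  have hvk : ∀ k : ℕ, t (k+1) • y k - (t (k+1) - 1) • x k = v k := by
    intro k
    rw [hy k]
    simp only [hv]
    rw [smul_add, smul_smul, hβ k]
    module
  have hvstep : ∀ k : ℕ, v (k+1) = v k - (α * t (k+1)) • gradient f (y k) := by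
    intro k
    have h1 : v (k+1) = x k + t (k+1) • (x (k+1) - x k) := by
      simp only [hv, Nat.add_sub_cancel]
    rw [h1, hx k, ← hvk k]
    module
  set E : ℕ → ℝ := fun k => 2*α*(t k)^2 * (f (x k) - f xs) + ‖v k - xs‖^2 with hE
  have hkey : ∀ k : ℕ, E (k+1) ≤
      2*α*(t (k+1))*(t (k+1) - 1)*(f (x k) - f xs) + ‖v k - xs‖^2 := by
    intro k
    have h1 := hstep k (x k)
    have h2 := hstep k xs
    set g := gradient f (y k) with hg
    have hT0 : (0:ℝ) ≤ t (k+1) - 1 := by linarith [hT1 k]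
    have hinner : ⟪g, v k - xs⟫ =
        (t (k+1) - 1) * ⟪g, y k - x k⟫ + ⟪g, y k - xs⟫ := by
      rw [← hvk k]
      simp only [inner_sub_right, real_inner_smul_right]
      ring
    have h3 : t (k+1) * (f (x (k+1)) - f xs) ≤
        (t (k+1) - 1)*(f (x k) - f xs) + ⟪g, v k - xs⟫
          - t (k+1)*(α/2)*‖g‖^2 := by
      rw [hinner]
      nlinarith [mul_le_mul_of_nonneg_left h1 hT0, h2]
    have hnorm : ‖v (k+1) - xs‖^2 = ‖v k - xs‖^2
        - 2*(α*t (k+1))*⟪g, v k - xs⟫ + (α*t (k+1))^2*‖g‖^2 := by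
      rw [hvstep k]
      have he : v k - (α * t (k+1)) • g - xs = (v k - xs) - (α * t (k+1)) • g := by abel
      rw [he, norm_sub_sq_real, real_inner_smul_right, norm_smul, Real.norm_eq_abs,
        mul_pow, sq_abs, real_inner_comm]
      ring
    have hTpos : (0:ℝ) ≤ 2*α*t (k+1) := by nlinarith [hT1 k, hα]
    have h4 := mul_le_mul_of_nonneg_left h3 hTpos
    simp only [hE]
    nlinarith [h4, hnorm]
  have hcoef : ∀ k : ℕ, t (k+1) * (t (k+1) - 1) ≤ (t k)^2 := by
    intro k
    have h0 := (Nat.cast_nonneg k : (0:ℝ) ≤ k)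
    have key : ((k:ℝ)+r-1)*(k:ℝ) ≤ ((k:ℝ)+r-2)^2 := by
      nlinarith [mul_nonneg h0 (by linarith : (0:ℝ) ≤ r-3)]
    calc t (k+1) * (t (k+1) - 1) = (((k:ℝ)+r-1)*(k:ℝ))/(r-1)^2 := by
          simp only [ht]; push_cast; field_simp; ring
      _ ≤ ((k:ℝ)+r-2)^2/(r-1)^2 := by
          exact div_le_div_of_nonneg_right key (by positivity) |>.trans_eq rfl
      _ = (t k)^2 := by simp only [ht]; rw [div_pow]
  have hmono : ∀ k : ℕ, E (k+1) ≤ E k := by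
    intro k
    have h5 : 2*α*(t (k+1))*(t (k+1) - 1)*(f (x k) - f xs)
        ≤ 2*α*(t k)^2*(f (x k) - f xs) := by
      apply mul_le_mul_of_nonneg_right _ (hδ k)
      nlinarith [hcoef k, hα]
    have := hkey k
    simp only [hE] at this ⊢
    linarith
  have ht1 : t 1 = 1 := by
    simp only [ht]
    push_cast
    rw [div_eq_one_iff_eq (ne_of_gt hr1)]
    ring
  have hv0 : v 0 = x 0 := by
    simp only [hv]
    norm_num
  have hE1 : E 1 ≤ ‖x 0 - xs‖^2 := by
    have h := hkey 0
    rw [ht1, hv0] at h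
    simpa using h
  have hEk : ∀ k : ℕ, E (k+1) ≤ ‖x 0 - xs‖^2 := by
    intro k
    induction k with
    | zero => exact hE1
    | succ m ih => exact le_trans (hmono (m+1)) ih
  intro k
  match k with
  | 0 =>
    have hd := descent_aux f L hsmooth hlip xs (x 0)
    rw [hgxs] at hd
    simp only [inner_zero_left, add_zero, zero_add] at hd
    have hd' : f (x 0) - f xs ≤ L/2 * ‖x 0 - xs‖^2 := by linarith
    push_cast
    rw [le_div_iff₀ (mul_pos (by linarith : (0:ℝ) < 2*α) (pow_pos (by linarith : (0:ℝ) < (0:ℝ)+r-2) 2))]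
    have b1 := mul_le_mul_of_nonneg_right hd'
      (by positivity : (0:ℝ) ≤ 2*α*((0:ℝ)+r-2)^2)
    have b2 := mul_le_mul_of_nonneg_right hαL'
      (mul_nonneg hC (sq_nonneg (r-2)))
    have b3 : ‖x 0 - xs‖^2*(r-2)^2 ≤ ‖x 0 - xs‖^2*(r-1)^2 := by
      nlinarith [mul_nonneg hC (by linarith : (0:ℝ) ≤ 2*r-3)]
    nlinarith [b1, b2, b3]
  | (k'+1) =>
    have h := hEk k'
    have hnn : (0:ℝ) ≤ ‖v (k'+1) - xs‖^2 := sq_nonneg _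
    have h6 : 2*α*(t (k'+1))^2 * (f (x (k'+1)) - f xs) ≤ ‖x 0 - xs‖^2 := by
      simp only [hE] at h; linarith
    have hK : (0:ℝ) < (k':ℝ)+1+r-2 := by
      have := (Nat.cast_nonneg k' : (0:ℝ) ≤ k'); linarith
    have h8 : (t (k'+1))^2*(r-1)^2 = ((k':ℝ)+1+r-2)^2 := by
      simp only [ht]
      push_cast
      rw [div_pow]
      field_simp
    have h9 : 2*α*((k':ℝ)+1+r-2)^2*(f (x (k'+1)) - f xs) ≤ ‖x 0 - xs‖^2*(r-1)^2 := by
      calc 2*α*((k':ℝ)+1+r-2)^2*(f (x (k'+1)) - f xs)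
          = (2*α*(t (k'+1))^2*(f (x (k'+1)) - f xs))*(r-1)^2 := by rw [← h8]; ring
        _ ≤ ‖x 0 - xs‖^2*(r-1)^2 := mul_le_mul_of_nonneg_right h6 (sq_nonneg _)
    push_cast
    rw [le_div_iff₀ (mul_pos (by linarith : (0:ℝ) < 2*α) (pow_pos hK 2))]
    nlinarith [h9]
end

section
/- Let f : ℝⁿ → ℝ be convex and L-smooth (L > 0), and let x* be a minimizer of f with f* = f(x*). Define the Nesterov accelerated gradient iterates by x₋₁ = x₀ (given), y_k = x_k + ((k−1)/(k+2))·(x_k − x_{k-1}) and x_{k+1} = y_k − (1/L)∇f(y_k) for all k ≥ 0. Then for every k ≥ 0, f(x_k) − f* ≤ 2L‖x₀ − x*‖² / (k+1)². -/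
open RealInnerProductSpace

private lemma inner_grad {n : ℕ} (f : EuclideanSpace ℝ (Fin n) → ℝ)
    (a v : EuclideanSpace ℝ (Fin n)) :
    ⟪gradient f a, v⟫ = fderiv ℝ f a v := by
  rw [gradient]
  exact InnerProductSpace.toDual_symm_apply

/-- The descent lemma for `L`-smooth functions. -/
private lemma descent_lemma {n : ℕ} (f : EuclideanSpace ℝ (Fin n) → ℝ) (L : ℝ) (_hL : 0 < L)
    (hsmooth : ContDiff ℝ 1 f)
    (hlip : ∀ a b, ‖gradient f a - gradient f b‖ ≤ L * ‖a - b‖)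
    (a b : EuclideanSpace ℝ (Fin n)) :
    f b ≤ f a + ⟪gradient f a, b - a⟫ + L / 2 * ‖b - a‖ ^ 2 := by
  set d := b - a with hd
  set φ : ℝ → ℝ := fun t => f (a + t • d) - t * ⟪gradient f a, d⟫ - L / 2 * t ^ 2 * ‖d‖ ^ 2 with hφ
  have hderiv : ∀ t : ℝ, HasDerivAt φ
      (⟪gradient f (a + t • d), d⟫ - ⟪gradient f a, d⟫ - L * t * ‖d‖ ^ 2) t := by
    intro t
    have hdiff : DifferentiableAt ℝ f (a + t • d) :=
      (hsmooth.differentiable one_ne_zero).differentiableAt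
    have hc : HasDerivAt (fun t : ℝ => a + t • d) d t := by
      simpa using ((hasDerivAt_id t).smul_const d).const_add a
    have h1 : HasDerivAt (fun t : ℝ => f (a + t • d)) (fderiv ℝ f (a + t • d) d) t :=
      hdiff.hasFDerivAt.comp_hasDerivAt t hc
    rw [← inner_grad] at h1
    have h2 : HasDerivAt (fun t : ℝ => t * ⟪gradient f a, d⟫) ⟪gradient f a, d⟫ t := by
      simpa using (hasDerivAt_id t).mul_const (⟪gradient f a, d⟫ : ℝ)
    have h3 : HasDerivAt (fun t : ℝ => L / 2 * t ^ 2 * ‖d‖ ^ 2) (L * t * ‖d‖ ^ 2) t := by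
      have := ((hasDerivAt_pow 2 t).const_mul (L / 2)).mul_const (‖d‖ ^ 2)
      refine this.congr_deriv ?_
      push_cast; ring
    exact (h1.sub h2).sub h3
  obtain ⟨c, hc, hceq⟩ := exists_hasDerivAt_eq_slope φ _ one_pos
    (fun t _ => (hderiv t).continuousAt.continuousWithinAt)
    (fun t ht => hderiv t)
  have hkey : φ 1 - φ 0 ≤ 0 := by
    have heq : φ 1 - φ 0
        = ⟪gradient f (a + c • d), d⟫ - ⟪gradient f a, d⟫ - L * c * ‖d‖ ^ 2 := by
      rw [hceq]; norm_num
    rw [heq]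
    have h1 : ⟪gradient f (a + c • d) - gradient f a, d⟫
        ≤ ‖gradient f (a + c • d) - gradient f a‖ * ‖d‖ := real_inner_le_norm _ _
    have h2 : ‖gradient f (a + c • d) - gradient f a‖ ≤ L * (c * ‖d‖) := by
      have := hlip (a + c • d) a
      simpa [norm_smul, abs_of_pos hc.1, mul_assoc] using this
    have hsub : ⟪gradient f (a + c • d) - gradient f a, d⟫
        = ⟪gradient f (a + c • d), d⟫ - ⟪gradient f a, d⟫ := inner_sub_left _ _ _
    nlinarith [norm_nonneg d, norm_nonneg (gradient f (a + c • d) - gradient f a), hc.1.le]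
  have h0 : φ 0 = f a := by simp [hφ]
  have h1 : φ 1 = f b - ⟪gradient f a, d⟫ - L / 2 * ‖d‖ ^ 2 := by
    simp [hφ, hd]
  rw [h0, h1] at hkey
  linarith

set_option maxHeartbeats 1000000 in
/-- Nesterov's accelerated gradient method with `α = 1/L` and `β_k = (k-1)/(k+2)`:
`f(x_k) - f* ≤ 2L‖x₀ - x*‖²/(k+1)²`.  The initial condition `x₋₁ = x₀` is encoded by
ℕ-subtraction: at `k = 0` the momentum term `x 0 - x (0-1) = 0`. -/
theorem nesterov_convex_rate_special {n : ℕ} (f : EuclideanSpace ℝ (Fin n) → ℝ)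
    (L : ℝ) (hL : 0 < L)
    (hsmooth : ContDiff ℝ 1 f)
    (hlip : ∀ a b, ‖gradient f a - gradient f b‖ ≤ L * ‖a - b‖)
    (hconv : ∀ a b, f a + ⟪gradient f a, b - a⟫ ≤ f b)
    (xs : EuclideanSpace ℝ (Fin n)) (hmin : ∀ z, f xs ≤ f z)
    (x y : ℕ → EuclideanSpace ℝ (Fin n))
    (hy : ∀ k : ℕ, y k = x k + (((k : ℝ) - 1) / ((k : ℝ) + 2)) • (x k - x (k - 1)))
    (hx : ∀ k : ℕ, x (k + 1) = y k - (1 / L) • gradient f (y k)) :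
    ∀ k : ℕ, f (x k) - f xs ≤ 2 * L * ‖x 0 - xs‖ ^ 2 / ((k : ℝ) + 1) ^ 2 := by
  have hL' : L ≠ 0 := ne_of_gt hL
  set R : ℝ := ‖x 0 - xs‖ with hR
  -- gradient vanishes at the minimizer
  have hgxs : gradient f xs = 0 := by
    have hloc : IsLocalMin f xs := Filter.Eventually.of_forall hmin
    rw [gradient, hloc.fderiv_eq_zero, map_zero]
  -- nonnegativity of the suboptimality gap
  have hv : ∀ k, 0 ≤ f (x k) - f xs := fun k => sub_nonneg.2 (hmin _)
  -- key one-step inequality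
  have key : ∀ (k : ℕ) (z : EuclideanSpace ℝ (Fin n)),
      f (x (k + 1)) ≤ f z + ⟪gradient f (y k), y k - z⟫
        - 1 / (2 * L) * ‖gradient f (y k)‖ ^ 2 := by
    intro k z
    set g := gradient f (y k) with hg
    have hdesc := descent_lemma f L hL hsmooth hlip (y k) (x (k + 1))
    have hstep : x (k + 1) - y k = -((1 / L) • g) := by
      rw [hx k]; abel
    have hi : ⟪g, x (k + 1) - y k⟫ = -(1 / L) * ‖g‖ ^ 2 := by
      rw [hstep, inner_neg_right, real_inner_smul_right, real_inner_self_eq_norm_sq]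
      ring
    have hn : ‖x (k + 1) - y k‖ ^ 2 = (1 / L) ^ 2 * ‖g‖ ^ 2 := by
      rw [hstep, norm_neg, norm_smul]
      rw [Real.norm_eq_abs, abs_of_pos (by positivity : (0:ℝ) < 1 / L)]
      ring
    rw [hi, hn] at hdesc
    have hcv := hconv (y k) z
    have hiz : ⟪g, z - y k⟫ = -⟪g, y k - z⟫ := by
      rw [← inner_neg_right]; congr 1; abel
    rw [hiz] at hcv
    have : f (x (k + 1)) ≤ f (y k) - 1 / (2 * L) * ‖g‖ ^ 2 := by
      have h2 : (-(1/L) * ‖g‖ ^ 2) + L / 2 * ((1 / L) ^ 2 * ‖g‖ ^ 2)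
          = - (1 / (2 * L) * ‖g‖ ^ 2) := by field_simp; ring
      linarith [hdesc, h2.le, h2.ge]
    linarith
  -- the weight sequence and the energy vector
  set lam : ℕ → ℝ := fun k => ((k : ℝ) + 1) / 2 with hlam
  set w : ℕ → EuclideanSpace ℝ (Fin n) :=
    fun k => lam k • x k - (lam k - 1) • x (k - 1) - xs with hw
  -- identity 1 : w k = lam (k+1) • y k - (lam (k+1) - 1) • x k - xs
  have hid1 : ∀ k, lam (k + 1) • y k - (lam (k + 1) - 1) • x k - xs = w k := by
    intro k
    cases k with
    | zero =>
        have hy0 : y 0 = x 0 := by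
          rw [hy 0]
          norm_num
        simp only [hw, hlam, hy0]
        norm_num
        module
    | succ m =>
        have hcast : ((m + 1 : ℕ) : ℝ) = (m : ℝ) + 1 := by push_cast; ring
        have hden : ((m : ℝ) + 1) + 2 ≠ 0 := by positivity
        rw [hy (m + 1)]
        simp only [hw, hlam, Nat.add_sub_cancel, hcast]
        push_cast
        match_scalars <;> field_simp <;> ring
  -- identity 2 : w (k+1) = w k - (lam (k+1) / L) • g k
  have hid2 : ∀ k, w (k + 1) = w k - (lam (k + 1) / L) • gradient f (y k) := by
    intro k
    have h1 : w (k + 1) = lam (k + 1) • x (k + 1) - (lam (k + 1) - 1) • x k - xs := by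
      simp only [hw, Nat.add_sub_cancel]
    rw [h1, hx k, ← hid1 k]
    match_scalars <;> field_simp
  -- the energy decay inequality
  have hstar : ∀ k, lam (k + 1) ^ 2 * (f (x (k + 1)) - f xs) + L / 2 * ‖w (k + 1)‖ ^ 2
      ≤ (lam (k + 1) ^ 2 - lam (k + 1)) * (f (x k) - f xs) + L / 2 * ‖w k‖ ^ 2 := by
    intro k
    set g := gradient f (y k) with hg
    set lm := lam (k + 1) with hlm
    have hlm1 : 1 ≤ lm := by
      simp only [hlm, hlam]
      push_cast
      linarith [Nat.cast_nonneg (α := ℝ) k]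
    set A : ℝ := ⟪g, y k - x k⟫ with hA
    set B : ℝ := ⟪g, y k - xs⟫ with hB
    set s : ℝ := 1 / (2 * L) * ‖g‖ ^ 2 with hs
    have h1 : f (x (k + 1)) - f xs ≤ (f (x k) - f xs) + A - s := by
      have := key k (x k); linarith
    have h2 : f (x (k + 1)) - f xs ≤ B - s := by
      have := key k xs; linarith
    -- inner product with w k decomposes
    have hwk : w k = (lm - 1) • (y k - x k) + (y k - xs) := by
      rw [← hid1 k, ← hlm]
      module
    have hinner : ⟪g, w k⟫ = (lm - 1) * A + B := by
      rw [hwk, inner_add_right, real_inner_smul_right, hA, hB]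
    -- norm expansion
    have hnorm : L / 2 * ‖w (k + 1)‖ ^ 2
        = L / 2 * ‖w k‖ ^ 2 - lm * ((lm - 1) * A + B) + lm ^ 2 * s := by
      rw [hid2 k, ← hg, ← hlm]
      rw [norm_sub_sq_real, real_inner_smul_right, norm_smul, real_inner_comm, hinner]
      rw [Real.norm_eq_abs, hs]
      have hlmL : |lm / L| = lm / L := abs_of_pos (by positivity)
      rw [hlmL]
      field_simp
    rw [hnorm]
    have e1 := mul_le_mul_of_nonneg_left h1 (by nlinarith : (0:ℝ) ≤ lm ^ 2 - lm)
    have e2 := mul_le_mul_of_nonneg_left h2 (by linarith : (0:ℝ) ≤ lm)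
    nlinarith [e1, e2]
  -- w 0 = x 0 - xs
  have hw0 : w 0 = x 0 - xs := by
    simp only [hw, hlam]
    norm_num
    module
  -- the energy bound for k ≥ 1
  have hphi : ∀ k, 1 ≤ k → lam k ^ 2 * (f (x k) - f xs) + L / 2 * ‖w k‖ ^ 2
      ≤ L / 2 * R ^ 2 := by
    intro k hk
    induction k with
    | zero => omega
    | succ m ih =>
        cases Nat.eq_or_lt_of_le hk with
        | inl h =>
            have hm : m = 0 := by omega
            subst hm
            have h0 := hstar 0
            have hlam1 : lam 1 = 1 := by norm_num [hlam]
            rw [hlam1, hw0] at h0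
            rw [hR]
            norm_num at h0 ⊢
            linarith [h0]
        | inr h =>
            have hm : 1 ≤ m := by omega
            have ih' := ih hm
            have hst := hstar m
            have hlamle : lam (m + 1) ^ 2 - lam (m + 1) ≤ lam m ^ 2 := by
              simp only [hlam]
              push_cast
              nlinarith [Nat.cast_nonneg (α := ℝ) m]
            have : (lam (m + 1) ^ 2 - lam (m + 1)) * (f (x m) - f xs)
                ≤ lam m ^ 2 * (f (x m) - f xs) :=
              mul_le_mul_of_nonneg_right hlamle (hv m)
            linarith
  -- conclusion
  intro k
  cases k with
  | zero =>
      have hd := descent_lemma f L hL hsmooth hlip xs (x 0)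
      rw [hgxs] at hd
      simp only [inner_zero_left] at hd
      have hR2 : (0:ℝ) ≤ R ^ 2 := sq_nonneg R
      have hub : f (x 0) - f xs ≤ L / 2 * R ^ 2 := by
        rw [hR]; linarith
      have hgoal : 2 * L * R ^ 2 / ((0 : ℝ) + 1) ^ 2 = 2 * L * R ^ 2 := by norm_num
      push_cast
      rw [hgoal]
      nlinarith
  | succ m =>
      have hb := hphi (m + 1) (by omega)
      have hnn : 0 ≤ L / 2 * ‖w (m + 1)‖ ^ 2 := by positivity
      have hbb : (((m : ℝ) + 2) / 2) ^ 2 * (f (x (m + 1)) - f xs) ≤ L / 2 * R ^ 2 := by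
        have hlamv : lam (m + 1) = ((m : ℝ) + 2) / 2 := by
          simp only [hlam]; push_cast; ring
        rw [← hlamv]; linarith
      have hvk := hv (m + 1)
      push_cast
      rw [le_div_iff₀ (by positivity : (0:ℝ) < ((m : ℝ) + 1 + 1) ^ 2)]
      nlinarith [hbb]
end

section
/- Let f : ℝⁿ → ℝ be μ-strongly convex (μ > 0) and L-smooth (L > 0), let x* be the minimizer of f with f* = f(x*), and set κ = L/μ. Define the Nesterov accelerated gradient iterates by x₋₁ = x₀ (given), y_k = x_k + ((√κ − 1)/(√κ + 1))·(x_k − x_{k-1}) and x_{k+1} = y_k − (1/L)∇f(y_k) for all k ≥ 0. Then for every k ≥ 0, f(x_k) − f* ≤ (1 − 1/√κ)^k · ( f(x₀) − f* + (μ/2)‖x₀ − x*‖² ). -/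
open RealInnerProductSpace

lemma smooth_descent {E : Type*} [NormedAddCommGroup E] [InnerProductSpace ℝ E] [CompleteSpace E]
    (f : E → ℝ) (L : ℝ) (hL : 0 < L)
    (hsmooth : ContDiff ℝ 1 f)
    (hlip : ∀ a b, ‖gradient f a - gradient f b‖ ≤ L * ‖a - b‖)
    (a b : E) :
    f b ≤ f a + ⟪gradient f a, b - a⟫ + L / 2 * ‖b - a‖ ^ 2 := by
  have hdiff : Differentiable ℝ f := hsmooth.differentiable one_ne_zero
  set d := b - a with hd
  set φ' : ℝ → ℝ := fun t => ⟪gradient f (a + t • d), d⟫ with hφ'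
  have hderiv : ∀ t : ℝ, HasDerivAt (fun t : ℝ => f (a + t • d)) (φ' t) t := by
    intro t
    have hc : HasDerivAt (fun t : ℝ => a + t • d) d t := by
      simpa using ((hasDerivAt_id t).smul_const d).const_add a
    have hg : HasGradientAt f (gradient f (a + t • d)) (a + t • d) :=
      (hdiff (a + t • d)).hasGradientAt
    have := hg.hasFDerivAt.comp_hasDerivAt t hc
    exact this
  have hcontg : Continuous (gradient f) := by
    have : LipschitzWith (Real.toNNReal L) (gradient f) :=
      LipschitzWith.of_dist_le_mul (fun p q => by
        simpa [dist_eq_norm, Real.coe_toNNReal L hL.le] using hlip p q)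
    exact this.continuous
  have hφ'cont : Continuous φ' := by
    apply Continuous.inner
    · exact hcontg.comp (by continuity)
    · exact continuous_const
  have hint : ∫ t in (0:ℝ)..1, φ' t = f b - f a := by
    have := intervalIntegral.integral_eq_sub_of_hasDerivAt
      (f := fun t : ℝ => f (a + t • d)) (f' := φ')
      (fun t _ => hderiv t) (hφ'cont.intervalIntegrable 0 1)
    simpa [hd] using this
  have hbound : ∫ t in (0:ℝ)..1, φ' t ≤
      ∫ t in (0:ℝ)..1, (⟪gradient f a, d⟫ + L * ‖d‖ ^ 2 * t) := by
    apply intervalIntegral.integral_mono_on zero_le_one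
      (hφ'cont.intervalIntegrable 0 1)
      ((by continuity : Continuous fun t : ℝ => ⟪gradient f a, d⟫ + L * ‖d‖ ^ 2 * t).intervalIntegrable 0 1)
    intro t ht
    have h1 : φ' t - ⟪gradient f a, d⟫ = ⟪gradient f (a + t • d) - gradient f a, d⟫ := by
      simp [hφ', inner_sub_left]
    have h2 : ⟪gradient f (a + t • d) - gradient f a, d⟫ ≤ L * t * ‖d‖ ^ 2 := by
      calc ⟪gradient f (a + t • d) - gradient f a, d⟫
          ≤ ‖gradient f (a + t • d) - gradient f a‖ * ‖d‖ := real_inner_le_norm _ _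
        _ ≤ (L * ‖(a + t • d) - a‖) * ‖d‖ := by
            gcongr
            exact hlip _ _
        _ = L * t * ‖d‖ ^ 2 := by
            rw [add_sub_cancel_left, norm_smul, Real.norm_eq_abs, abs_of_nonneg ht.1]
            ring
    linarith [h1, h2]
  have hval : ∫ t in (0:ℝ)..1, (⟪gradient f a, d⟫ + L * ‖d‖ ^ 2 * t)
      = ⟪gradient f a, d⟫ + L / 2 * ‖d‖ ^ 2 := by
    rw [intervalIntegral.integral_add (intervalIntegrable_const)
      (Continuous.intervalIntegrable (u := fun t : ℝ => L * ‖d‖ ^ 2 * t) (continuous_const.mul continuous_id') 0 1),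
      intervalIntegral.integral_const_mul, integral_id,
      intervalIntegral.integral_const]
    simp
    ring
  linarith [hint, hbound, hval]

set_option maxHeartbeats 1000000 in
/-- Nesterov's accelerated gradient method on a `μ`-strongly convex, `L`-smooth
function, with `α = 1/L`, momentum `(√κ - 1)/(√κ + 1)` where `κ = L/μ`:
linear rate `(1 - 1/√κ)^k`.  The initial condition `x₋₁ = x₀` is encoded by
ℕ-subtraction: at `k = 0` the momentum term `x 0 - x (0-1) = 0`. -/
theorem nesterov_strongly_convex_rate {n : ℕ} (f : EuclideanSpace ℝ (Fin n) → ℝ)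
    (L μ : ℝ) (hL : 0 < L) (hμ : 0 < μ)
    (hsmooth : ContDiff ℝ 1 f)
    (hlip : ∀ a b, ‖gradient f a - gradient f b‖ ≤ L * ‖a - b‖)
    (hsconv : ∀ a b, f a + ⟪gradient f a, b - a⟫ + μ / 2 * ‖b - a‖ ^ 2 ≤ f b)
    (xs : EuclideanSpace ℝ (Fin n)) (hmin : ∀ z, f xs ≤ f z)
    (x y : ℕ → EuclideanSpace ℝ (Fin n))
    (hy : ∀ k : ℕ, y k = x k +
      ((Real.sqrt (L / μ) - 1) / (Real.sqrt (L / μ) + 1)) • (x k - x (k - 1)))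
    (hx : ∀ k : ℕ, x (k + 1) = y k - (1 / L) • gradient f (y k)) :
    ∀ k : ℕ, f (x k) - f xs ≤
      (1 - 1 / Real.sqrt (L / μ)) ^ k *
        (f (x 0) - f xs + μ / 2 * ‖x 0 - xs‖ ^ 2) := by
  rcases subsingleton_or_nontrivial (EuclideanSpace ℝ (Fin n)) with hsub | hnt
  · intro k
    have h0 : x k = xs := Subsingleton.elim _ _
    have h1 : x 0 = xs := Subsingleton.elim _ _
    simp [h0, h1]
  -- nontrivial case: μ ≤ L
  obtain ⟨v, hv⟩ := exists_ne (0 : EuclideanSpace ℝ (Fin n))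
  have hμL : μ ≤ L := by
    have h1 := hsconv v 0
    have h2 := hsconv 0 v
    have h3 := real_inner_le_norm (gradient f v - gradient f 0) v
    have h4 := hlip v 0
    simp only [zero_sub, sub_zero, inner_neg_right, norm_neg, inner_sub_left] at h1 h2 h3 h4
    have hv2 : 0 < ‖v‖ ^ 2 := by
      have hv' : 0 < ‖v‖ := norm_pos_iff.mpr hv
      positivity
    nlinarith [mul_le_mul_of_nonneg_right h4 (norm_nonneg v), hv2]
  set s := Real.sqrt (L / μ) with hs
  have hsq : s ^ 2 = L / μ := Real.sq_sqrt (by positivity)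
  have hs1 : (1:ℝ) ≤ s := by
    have h := Real.sqrt_le_sqrt (show (1:ℝ) ≤ L / μ from (one_le_div hμ).mpr hμL)
    simpa [hs] using h
  have hs0 : 0 < s := lt_of_lt_of_le one_pos hs1
  have hLs : μ * s ^ 2 = L := by rw [hsq]; field_simp
  set q : ℝ := 1 / s with hq
  have hq0 : 0 < q := by positivity
  have hq1 : q ≤ 1 := by rw [hq]; exact (div_le_one hs0).mpr hs1
  have hq2 : q ^ 2 = μ / L := by rw [hq, div_pow, one_pow, hsq, one_div_div]
  set Z : ℕ → EuclideanSpace ℝ (Fin n) :=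
    fun k => x k + (s - 1) • (x k - x (k - 1)) with hZ
  set Φ : ℕ → ℝ := fun k => f (x k) - f xs + μ / 2 * ‖Z k - xs‖ ^ 2 with hΦ
  have key : ∀ k : ℕ, Φ (k + 1) ≤ (1 - q) * Φ k := by
    intro k
    set g := gradient f (y k) with hg
    have hxk1 : x (k + 1) = y k - (1 / L) • g := hx k
    have hyk : y k = x k + ((s - 1) / (s + 1)) • (x k - x (k - 1)) := hy k
    have hzk1 : Z (k + 1) = x (k + 1) + (s - 1) • (x (k + 1) - x k) := by
      simp [hZ]
    -- main vector identity
    have hV4 : Z (k + 1) - xs =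
        (1 - q) • (Z k - xs) + q • (y k - xs) - (q / μ) • g := by
      rw [hzk1, hxk1, hyk]
      simp only [hZ]
      rw [hq, ← hLs]
      match_scalars <;> field_simp <;> ring
    have hV5 : y k - x k = q • ((Z k - xs) - (y k - xs)) := by
      rw [hyk]
      simp only [hZ]
      rw [hq]
      match_scalars <;> field_simp <;> ring
    -- descent step
    have e1 : f (x (k + 1)) ≤ f (y k) - 1 / (2 * L) * ‖g‖ ^ 2 := by
      have h := smooth_descent f L hL hsmooth hlip (y k) (x (k + 1))
      rw [← hg] at h
      have hsub : x (k + 1) - y k = -((1 / L) • g) := by rw [hxk1]; abel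
      rw [hsub] at h
      have hinner : ⟪g, -((1 / L) • g)⟫ = -(1 / L) * ‖g‖ ^ 2 := by
        rw [inner_neg_right, real_inner_smul_right, real_inner_self_eq_norm_sq]
        ring
      have hnorm : ‖-((1 / L) • g)‖ ^ 2 = (1 / L) ^ 2 * ‖g‖ ^ 2 := by
        rw [norm_neg, norm_smul, Real.norm_eq_abs, abs_of_pos (by positivity), mul_pow]
      rw [hinner, hnorm] at h
      have harith : L / 2 * ((1 / L) ^ 2 * ‖g‖ ^ 2) = 1 / (2 * L) * ‖g‖ ^ 2 := by
        field_simp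
      have heq : (1 : ℝ) / L * ‖g‖ ^ 2 = 2 * (1 / (2 * L)) * ‖g‖ ^ 2 := by
        ring
      linarith
    -- strong convexity at y k vs xs
    have e2 : f (y k) - f xs ≤ ⟪g, y k - xs⟫ - μ / 2 * ‖y k - xs‖ ^ 2 := by
      have h := hsconv (y k) xs
      rw [← hg] at h
      have h1 : ⟪g, xs - y k⟫ = -⟪g, y k - xs⟫ := by rw [← inner_neg_right, neg_sub]
      have h2 : ‖xs - y k‖ = ‖y k - xs‖ := norm_sub_rev _ _
      rw [h1, h2] at h
      linarith
    -- strong convexity at y k vs x k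
    have e3 : f (y k) - f (x k) ≤
        q * (⟪g, Z k - xs⟫ - ⟪g, y k - xs⟫) - μ / 2 * ‖x k - y k‖ ^ 2 := by
      have h := hsconv (y k) (x k)
      rw [← hg] at h
      have h1 : ⟪g, x k - y k⟫ = -⟪g, y k - x k⟫ := by rw [← inner_neg_right, neg_sub]
      rw [h1] at h
      have h2 : ⟪g, y k - x k⟫ = q * (⟪g, Z k - xs⟫ - ⟪g, y k - xs⟫) := by
        rw [hV5, real_inner_smul_right, inner_sub_right]
      linarith [h2 ▸ h]
    -- norm expansion
    have expand : ∀ (u v w : EuclideanSpace ℝ (Fin n)) (aa bb cc : ℝ),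
        ‖aa • u + bb • v - cc • w‖ ^ 2 = aa ^ 2 * ‖u‖ ^ 2 + bb ^ 2 * ‖v‖ ^ 2
          + cc ^ 2 * ‖w‖ ^ 2 + 2 * aa * bb * ⟪u, v⟫
          - 2 * aa * cc * ⟪w, u⟫ - 2 * bb * cc * ⟪w, v⟫ := by
      intro u v w aa bb cc
      simp only [norm_sub_sq_real, norm_add_sq_real, inner_add_left,
        real_inner_smul_left, real_inner_smul_right, norm_smul,
        Real.norm_eq_abs, mul_pow, sq_abs]
      rw [real_inner_comm w u, real_inner_comm w v]
      ring
    have hZY : ‖(Z k - xs) - (y k - xs)‖ ^ 2 =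
        ‖Z k - xs‖ ^ 2 - 2 * ⟪Z k - xs, y k - xs⟫ + ‖y k - xs‖ ^ 2 :=
      norm_sub_sq_real _ _
    have e4 : μ / 2 * ‖Z (k + 1) - xs‖ ^ 2 =
        (1 - q) * (μ / 2 * ‖Z k - xs‖ ^ 2) + q * (μ / 2 * ‖y k - xs‖ ^ 2)
          - q * (1 - q) * (μ / 2 * ‖(Z k - xs) - (y k - xs)‖ ^ 2)
          - q * ((1 - q) * ⟪g, Z k - xs⟫ + q * ⟪g, y k - xs⟫)
          + 1 / (2 * L) * ‖g‖ ^ 2 := by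
      have hrw : (1:ℝ) / (2 * L) = q ^ 2 / (2 * μ) := by
        rw [hq2]; field_simp
      rw [hV4, expand, hZY, hrw]
      set PZ := ⟪g, Z k - xs⟫
      set PY := ⟪g, y k - xs⟫
      set IZY := ⟪Z k - xs, y k - xs⟫
      set NZ := ‖Z k - xs‖
      set NY := ‖y k - xs‖
      set NG := ‖g‖
      field_simp
      ring
    -- assemble
    have h3' := mul_le_mul_of_nonneg_left e3 (by linarith : (0:ℝ) ≤ 1 - q)
    have h2' := mul_le_mul_of_nonneg_left e2 hq0.le
    have pos1 : 0 ≤ (1 - q) * (μ / 2 * ‖x k - y k‖ ^ 2) :=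
      mul_nonneg (by linarith) (by positivity)
    have pos2 : 0 ≤ q * (1 - q) * (μ / 2 * ‖(Z k - xs) - (y k - xs)‖ ^ 2) :=
      mul_nonneg (mul_nonneg hq0.le (by linarith)) (by positivity)
    simp only [hΦ]
    linarith [e1, h2', h3', e4, pos1, pos2]
  have hZ0 : Z 0 = x 0 := by
    show x 0 + (s - 1) • (x 0 - x (0 - 1)) = x 0
    norm_num
  have main : ∀ k : ℕ, Φ k ≤ (1 - q) ^ k * Φ 0 := by
    intro k
    induction k with
    | zero => simp
    | succ k ih =>
      calc Φ (k + 1) ≤ (1 - q) * Φ k := key k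
        _ ≤ (1 - q) * ((1 - q) ^ k * Φ 0) :=
            mul_le_mul_of_nonneg_left ih (by linarith)
        _ = (1 - q) ^ (k + 1) * Φ 0 := by ring
  intro k
  have h := main k
  have hΦk : f (x k) - f xs ≤ Φ k := by
    have : 0 ≤ μ / 2 * ‖Z k - xs‖ ^ 2 := by positivity
    simp only [hΦ]
    linarith
  have hΦ0 : Φ 0 = f (x 0) - f xs + μ / 2 * ‖x 0 - xs‖ ^ 2 := by
    simp only [hΦ, hZ0]
  rw [hΦ0] at h
  exact le_trans hΦk h
end
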